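/- Let G be an action operad and P a G-operad in sets such that for every n, every p ∈ P(n) and every g ∈ G(n), p·g = p implies πₙ(g) is the identity permutation. Then the monad P̲ on the category of sets is cartesian: the functor P̲ preserves pullbacks, and for every function f : X → Y the naturality squares of the unit η (with η_X(x) = [id; x]) and of the multiplication μ (with μ_X[p; [q₁; x̲₁],…,[qₙ; x̲ₙ]] = [μ(p; q₁,…,qₙ); x̲₁,…,x̲ₙ]) are pullback squares. -/

import Mathlib

/-- Cast an element of a dependent family along an equality of indices. -/
def castF (F : ℕ → Type) {a b : ℕ} (h : a = b) (x : F a) : F b := h ▸ x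

/-- Splitting off the first summand of a sigma type over `Fin (n+1)`. -/
def sigmaFinSucc {n : ℕ} (β : Fin (n + 1) → Type) :
    (Σ i : Fin (n + 1), β i) ≃ (β 0 ⊕ Σ i : Fin n, β i.succ) where
  toFun x := Fin.cases (motive := fun j => β j → β 0 ⊕ Σ i : Fin n, β i.succ)
    Sum.inl (fun i b => Sum.inr ⟨i, b⟩) x.1 x.2
  invFun s := Sum.elim (fun b => ⟨0, b⟩) (fun p => ⟨p.1.succ, p.2⟩) s
  left_inv x := by
    obtain ⟨i, b⟩ := x
    induction i using Fin.cases with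
    | zero => rfl
    | succ i => rfl
  right_inv s := by rcases s with b | ⟨i, b⟩ <;> rfl

/-- The lexicographic identification of a disjoint union of blocks
`Fin (k 0), …, Fin (k (n-1))` (in this order) with `Fin (k 0 + ⋯ + k (n-1))`. -/
def finSigmaEquiv : ∀ {n : ℕ} (k : Fin n → ℕ), (Σ i : Fin n, Fin (k i)) ≃ Fin (∑ i, k i)
  | 0, k => by
      haveI : IsEmpty (Fin (∑ i : Fin 0, k i)) := by
        rw [Finset.univ_eq_empty, Finset.sum_empty]; infer_instance
      exact Equiv.equivOfIsEmpty _ _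
  | n + 1, k =>
      (sigmaFinSucc fun i => Fin (k i)).trans <|
        ((Equiv.sumCongr (Equiv.refl (Fin (k 0))) (finSigmaEquiv fun i => k i.succ)).trans
          (finSumFinEquiv.trans (finCongr (Fin.sum_univ_succ k).symm)))

/-- Operadic composition in the symmetric operad:
`μ(σ; τ₁, …, τₙ) = σ⁺ · (τ₁ ⊕ ⋯ ⊕ τₙ)`. -/
def permOperadComp {n : ℕ} (k : Fin n → ℕ) (σ : Equiv.Perm (Fin n))
    (τ : ∀ i, Equiv.Perm (Fin (k i))) : Equiv.Perm (Fin (∑ i, k i)) :=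
  (finSigmaEquiv k).symm.trans <|
    ((Equiv.sigmaCongr (β₂ := fun j => Fin (k (σ.symm j))) σ
        fun i => (τ i).trans (finCongr (congrArg k (σ.symm_apply_apply i).symm))).trans
      ((finSigmaEquiv fun j => k (σ.symm j)).trans (finCongr (Equiv.sum_comp σ.symm k))))

lemma sum_sigma_eq {n : ℕ} (k : Fin n → ℕ) (m : ∀ i, Fin (k i) → ℕ) :
    (∑ s : Fin (∑ i, k i), m ((finSigmaEquiv k).symm s).1 ((finSigmaEquiv k).symm s).2)
      = ∑ i, ∑ j, m i j := by
  have h := Equiv.sum_comp (finSigmaEquiv k)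
    (fun s => m ((finSigmaEquiv k).symm s).1 ((finSigmaEquiv k).symm s).2)
  rw [← h]
  have h2 : ∀ p : (i : Fin n) × Fin (k i),
      m ((finSigmaEquiv k).symm ((finSigmaEquiv k) p)).fst
          ((finSigmaEquiv k).symm ((finSigmaEquiv k) p)).snd = m p.1 p.2 := by
    intro p; rw [Equiv.symm_apply_apply]
  rw [Finset.sum_congr rfl fun p _ => h2 p, ← Finset.univ_sigma_univ, Finset.sum_sigma]
/-- An action operad: an operad in sets whose levels are groups, with a map to the
symmetric operad that is levelwise a group homomorphism and an operad map, and
satisfying the exchange law relating group multiplication and operadic composition. -/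
structure ActionOperad (G : ℕ → Type) [∀ n, Group (G n)] where
  /-- the operadic unit `id ∈ G(1)` -/
  unit : G 1
  /-- operadic composition `μ : G(n) × G(k₁) × ⋯ × G(kₙ) → G(k₁+⋯+kₙ)` -/
  comp : ∀ {n : ℕ} {k : Fin n → ℕ}, G n → (∀ i, G (k i)) → G (∑ i, k i)
  /-- the underlying-permutation group homomorphisms `πₙ : G(n) → Σₙ` -/
  π : ∀ n : ℕ, G n →* Equiv.Perm (Fin n)
  /-- `μ(id; x) = x` -/
  unit_comp : ∀ {n : ℕ} (x : G n),
    castF G (Fin.sum_univ_one fun _ => n) (comp unit fun _ : Fin 1 => x) = x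
  /-- `μ(x; id, …, id) = x` -/
  comp_unit : ∀ {n : ℕ} (x : G n),
    castF G (by simp : (∑ _i : Fin n, 1) = n) (comp x fun _ : Fin n => unit) = x
  /-- associativity of operadic composition -/
  comp_assoc : ∀ {n : ℕ} {k : Fin n → ℕ} {m : ∀ i, Fin (k i) → ℕ}
      (x : G n) (y : ∀ i, G (k i)) (z : ∀ i j, G (m i j)),
      castF G (sum_sigma_eq k m)
        (comp (comp x y) fun s => z ((finSigmaEquiv k).symm s).1 ((finSigmaEquiv k).symm s).2)
        = comp x fun i => comp (y i) (z i)
  /-- `π` preserves the operadic unit -/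
  π_unit : π 1 unit = 1
  /-- `π` is a map of operads -/
  π_comp : ∀ {n : ℕ} {k : Fin n → ℕ} (g : G n) (f : ∀ i, G (k i)),
      π _ (comp g f) = permOperadComp k (π n g) fun i => π _ (f i)
  /-- the exchange law
  `μ(g; f₁,…,fₙ)·μ(g′; f₁′,…,fₙ′) = μ(g·g′; f_{π(g′)(1)}·f₁′, …, f_{π(g′)(n)}·fₙ′)` -/
  exchange : ∀ {n : ℕ} {k : Fin n → ℕ} (g g' : G n)
      (f : ∀ i, G (k ((π n g').symm i))) (f' : ∀ i, G (k i)),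
      castF G (Equiv.sum_comp (π n g').symm k) (comp g f) * comp g' f'
        = comp (g * g') fun i =>
            castF G (congrArg k ((π n g').symm_apply_apply i)) (f (π n g' i)) * f' i

/-- A `G`-operad for an action operad `G`: an operad `P` in sets together with a
right `G(n)`-action on each `P(n)` satisfying the two equivariance axioms. -/
structure GOperad (G : ℕ → Type) [∀ n, Group (G n)] (A : ActionOperad G) where
  /-- the underlying family of sets -/
  P : ℕ → Type
  /-- the operadic unit `id ∈ P(1)` -/
  unit : P 1
  /-- operadic composition -/
  comp : ∀ {n : ℕ} {k : Fin n → ℕ}, P n → (∀ i, P (k i)) → P (∑ i, k i)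
  /-- the right `G(n)`-action on `P(n)` -/
  act : ∀ {n : ℕ}, P n → G n → P n
  act_one : ∀ {n : ℕ} (x : P n), act x 1 = x
  act_mul : ∀ {n : ℕ} (x : P n) (g h : G n), act x (g * h) = act (act x g) h
  unit_comp : ∀ {n : ℕ} (x : P n),
    castF P (Fin.sum_univ_one fun _ => n) (comp unit fun _ : Fin 1 => x) = x
  comp_unit : ∀ {n : ℕ} (x : P n),
    castF P (by simp : (∑ _i : Fin n, 1) = n) (comp x fun _ : Fin n => unit) = x
  comp_assoc : ∀ {n : ℕ} {k : Fin n → ℕ} {m : ∀ i, Fin (k i) → ℕ}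
      (x : P n) (y : ∀ i, P (k i)) (z : ∀ i j, P (m i j)),
      castF P (sum_sigma_eq k m)
        (comp (comp x y) fun s => z ((finSigmaEquiv k).symm s).1 ((finSigmaEquiv k).symm s).2)
        = comp x fun i => comp (y i) (z i)
  /-- `μ(x; y₁·g₁, …, yₙ·gₙ) = μ(x; y₁, …, yₙ)·μ(e; g₁, …, gₙ)` -/
  equiv_inner : ∀ {n : ℕ} {k : Fin n → ℕ} (x : P n) (y : ∀ i, P (k i))
      (g : ∀ i, G (k i)),
      comp x (fun i => act (y i) (g i)) = act (comp x y) (A.comp (1 : G n) g)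
  /-- `μ(x·g; y₁, …, yₙ) = μ(x; y_{π(g)⁻¹(1)}, …, y_{π(g)⁻¹(n)})·μ(g; e, …, e)` -/
  equiv_outer : ∀ {n : ℕ} {k : Fin n → ℕ} (x : P n) (g : G n) (y : ∀ i, P (k i)),
      comp (act x g) y
        = castF P (Equiv.sum_comp (A.π n g).symm k)
            (act (comp x fun i => y ((A.π n g).symm i))
              (A.comp g fun i => (1 : G (k ((A.π n g).symm i)))))

open CategoryTheory

variable {G : ℕ → Type} [∀ n, Group (G n)] {A : ActionOperad G}

/-- The relation `(p·g; x₁,…,xₙ) ∼ (p; x_{π(g)⁻¹(1)},…,x_{π(g)⁻¹(n)})` defining the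
quotient `P(n) ×_{G(n)} Xⁿ`. -/
def PRel (P : GOperad G A) (n : ℕ) (X : Type) :
    P.P n × (Fin n → X) → P.P n × (Fin n → X) → Prop :=
  fun a b => ∃ g : G n, a.1 = P.act b.1 g ∧ ∀ i, b.2 i = a.2 ((A.π n g).symm i)

/-- The value `P̲(X) = ∐ₙ P(n) ×_{G(n)} Xⁿ` of the endofunctor associated to a
`G`-operad `P`. -/
def PApply (P : GOperad G A) (X : Type) : Type :=
  Σ n : ℕ, Quot (PRel P n X)

/-- The endofunctor `P̲` of the category of sets associated to a `G`-operad `P`. -/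
def PEndofunctor (P : GOperad G A) : Type ⥤ Type where
  obj X := PApply P X
  map {X Y} f := TypeCat.ofHom fun z =>
    ⟨z.1, Quot.lift (fun a => Quot.mk _ (a.1, fun i => f (a.2 i)))
      (by
        rintro a b ⟨g, h1, h2⟩
        exact Quot.sound ⟨g, h1, fun i => by show f (b.2 i) = f (a.2 _); rw [h2 i]⟩) z.2⟩
  map_id X := by
    refine ConcreteCategory.hom_ext _ _ fun z => ?_
    obtain ⟨n, q⟩ := z
    induction q using Quot.ind with
    | _ a => rfl
  map_comp {X Y Z} f g := by
    refine ConcreteCategory.hom_ext _ _ fun z => ?_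
    obtain ⟨n, q⟩ := z
    induction q using Quot.ind with
    | _ a => rfl

/-- The unit `η_X : X → P̲(X)`, `x ↦ [id; x]`, of the monad associated to a
`G`-operad `P`. -/
def pUnitMap (P : GOperad G A) (X : Type) : X ⟶ (PEndofunctor P).obj X :=
  TypeCat.ofHom fun x => ⟨1, Quot.mk _ (P.unit, fun _ => x)⟩

/-- The defining formula of the multiplication of the monad `P̲`:
`μ_X[p; [q₁; x̲₁], …, [qₙ; x̲ₙ]] = [μ(p; q₁,…,qₙ); x̲₁,…,x̲ₙ]`. -/
def IsPMulMap (P : GOperad G A)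
    (mu : ∀ X : Type, (PEndofunctor P).obj ((PEndofunctor P).obj X) ⟶
      (PEndofunctor P).obj X) : Prop :=
  ∀ (X : Type) (n : ℕ) (k : Fin n → ℕ) (p : P.P n) (q : ∀ i, P.P (k i))
      (xs : ∀ i, Fin (k i) → X),
    mu X ⟨n, Quot.mk _ (p, fun i => ⟨k i, Quot.mk _ (q i, xs i)⟩)⟩
      = ⟨∑ i, k i, Quot.mk _ (P.comp p q,
          fun s => xs ((finSigmaEquiv k).symm s).1 ((finSigmaEquiv k).symm s).2)⟩
section Helpers

lemma castF_castF (F : ℕ → Type) {a b c : ℕ} (h : a = b) (h' : b = c) (x : F a) :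
    castF F h' (castF F h x) = castF F (h.trans h') x := by subst h h'; rfl

lemma castF_self (F : ℕ → Type) {a : ℕ} (h : a = a) (x : F a) : castF F h x = x := rfl

variable {G : ℕ → Type} [∀ n, Group (G n)] {A : ActionOperad G}

lemma castF_act (P : GOperad G A) {m m' : ℕ} (E : m = m') (z : P.P m) (u : G m) :
    castF P.P E (P.act z u) = P.act (castF P.P E z) (castF G E u) := by subst E; rfl

lemma castF_pi {m m' : ℕ} (E : m = m') (u : G m) (j : Fin m') :
    A.π m' (castF G E u) j = Fin.cast E (A.π m u (Fin.cast E.symm j)) := by subst E; rfl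

lemma prel_equivalence (P : GOperad G A) (n : ℕ) (X : Type) :
    Equivalence (PRel P n X) := by
  constructor
  · rintro ⟨z, t⟩
    refine ⟨1, (P.act_one z).symm, fun i => ?_⟩
    have h : (A.π n 1).symm i = i := by rw [map_one]; rfl
    rw [h]
  · rintro ⟨z, t⟩ ⟨z', t'⟩ ⟨g, h1, h2⟩
    refine ⟨g⁻¹, ?_, fun i => ?_⟩
    · rw [h1, ← P.act_mul, mul_inv_cancel, P.act_one]
    · have h : (A.π n g⁻¹).symm i = A.π n g i := by
        rw [map_inv, Equiv.Perm.inv_def, Equiv.symm_symm]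
      rw [h, h2 (A.π n g i), Equiv.symm_apply_apply]
  · rintro ⟨z, t⟩ ⟨z', t'⟩ ⟨z'', t''⟩ ⟨g, h1, h2⟩ ⟨g', h1', h2'⟩
    refine ⟨g' * g, ?_, fun i => ?_⟩
    · rw [h1, h1', ← P.act_mul]
    · have h : (A.π n (g' * g)).symm i = (A.π n g).symm ((A.π n g').symm i) := by
        rw [map_mul]; rfl
    
      rw [h, h2' i, h2 ((A.π n g').symm i)]

lemma prel_quot_eq (P : GOperad G A) (n : ℕ) (X : Type)
    (a b : P.P n × (Fin n → X)) :
    Quot.mk (PRel P n X) a = Quot.mk (PRel P n X) b ↔ PRel P n X a b :=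
  Quot.eq.trans (prel_equivalence P n X).eqvGen_iff

lemma papply_mk_eq_iff (P : GOperad G A) (X : Type) {m m' : ℕ}
    (a : P.P m × (Fin m → X)) (b : P.P m' × (Fin m' → X)) :
    (⟨m, Quot.mk _ a⟩ : PApply P X) = ⟨m', Quot.mk _ b⟩ ↔
      ∃ (E : m = m') (u : G m'), castF P.P E a.1 = P.act b.1 u ∧
        ∀ i, b.2 i = a.2 (Fin.cast E.symm ((A.π m' u).symm i)) := by
  constructor
  · intro h
    obtain ⟨E, h2⟩ := Sigma.ext_iff.mp h
    have E' : m = m' := E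
    subst E'
    obtain ⟨u, hu1, hu2⟩ := (prel_quot_eq P m X a b).mp (eq_of_heq h2)
    exact ⟨rfl, u, hu1, fun i => hu2 i⟩
  · rintro ⟨rfl, u, h1, h2⟩
    exact congrArg (Sigma.mk m) (Quot.sound ⟨u, h1, fun i => h2 i⟩)

end Helpers
section Helpers2

open CategoryTheory Limits

lemma fsE_cast {n : ℕ} {k₁ k₂ : Fin n → ℕ} (e : k₁ = k₂)
    (E : ∑ i, k₁ i = ∑ i, k₂ i) {a₁ a₂ : Fin n} (ha : a₁ = a₂)
    {b₁ : Fin (k₁ a₁)} {b₂ : Fin (k₂ a₂)} (hb : (b₁ : ℕ) = (b₂ : ℕ)) :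
    Fin.cast E (finSigmaEquiv k₁ ⟨a₁, b₁⟩) = finSigmaEquiv k₂ ⟨a₂, b₂⟩ := by
  subst e ha
  have hb' : b₁ = b₂ := Fin.ext hb
  subst hb'
  apply Fin.ext
  simp [Fin.coe_cast]

lemma flat_apply {n : ℕ} {k : Fin n → ℕ} {X : Type} (xs : ∀ i, Fin (k i) → X)
    (i : Fin n) (j : Fin (k i)) :
    xs ((finSigmaEquiv k).symm (finSigmaEquiv k ⟨i, j⟩)).1
      ((finSigmaEquiv k).symm (finSigmaEquiv k ⟨i, j⟩)).2 = xs i j :=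
  congrArg (fun s : Σ i, Fin (k i) => xs s.1 s.2)
    (Equiv.symm_apply_apply (finSigmaEquiv k) ⟨i, j⟩)

lemma pOC_apply {n : ℕ} (k : Fin n → ℕ) (σ : Equiv.Perm (Fin n))
    (τ : ∀ i, Equiv.Perm (Fin (k i))) (a : Fin n) (b : Fin (k a)) :
    permOperadComp k σ τ (finSigmaEquiv k ⟨a, b⟩)
      = Fin.cast (Equiv.sum_comp σ.symm k)
          (finSigmaEquiv (fun j => k (σ.symm j))
            ⟨σ a, finCongr (congrArg k (σ.symm_apply_apply a).symm) (τ a b)⟩) := by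
  unfold permOperadComp
  rw [Equiv.trans_apply, Equiv.symm_apply_apply]
  rfl

lemma pOC_one_apply {n : ℕ} (k : Fin n → ℕ) (σ : Equiv.Perm (Fin n)) (hσ : σ = 1)
    (τ : ∀ i, Equiv.Perm (Fin (k i))) (a : Fin n) (b : Fin (k a)) :
    permOperadComp k σ τ (finSigmaEquiv k ⟨a, b⟩) = finSigmaEquiv k ⟨a, τ a b⟩ := by
  subst hσ
  rw [pOC_apply]
  have h1 : Fin.cast (Equiv.sum_comp (1 : Equiv.Perm (Fin n)).symm k)
      (finSigmaEquiv (fun j => k ((1 : Equiv.Perm (Fin n)).symm j))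
        ⟨(1 : Equiv.Perm (Fin n)) a,
          finCongr (congrArg k ((1 : Equiv.Perm (Fin n)).symm_apply_apply a).symm)
            ((τ a) b)⟩) = finSigmaEquiv k ⟨a, τ a b⟩ := by
    apply fsE_cast
    · rfl
    · rfl
    · rfl
  exact h1

variable {G : ℕ → Type} [∀ n, Group (G n)] {A : ActionOperad G}

lemma pi_eq_of_act_eq (P : GOperad G A)
    (hfree : ∀ (n : ℕ) (p : P.P n) (g : G n), P.act p g = p → A.π n g = 1)
    {n : ℕ} {z : P.P n} {u u' : G n} (h : P.act z u = P.act z u') :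
    A.π n u = A.π n u' := by
  have h2 : P.act z (u' * u⁻¹) = z := by
    rw [P.act_mul, ← h, ← P.act_mul, mul_inv_cancel, P.act_one]
  have h3 := hfree n z (u' * u⁻¹) h2
  have h4 : A.π n u' * (A.π n u)⁻¹ = 1 := by rw [← map_inv, ← map_mul]; exact h3
  exact (mul_inv_eq_one.mp h4).symm

lemma comp_congr (P : GOperad G A) {n : ℕ} {k₁ k₂ : Fin n → ℕ} (e : k₁ = k₂)
    (E : ∑ i, k₁ i = ∑ i, k₂ i) (p : P.P n) (Y : ∀ i, P.P (k₁ i)) :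
    P.comp p (fun i => castF P.P (congrFun e i) (Y i)) = castF P.P E (P.comp p Y) := by
  subst e
  rfl

/-- Canonical representatives for elements of `PApply`. -/
lemma papply_rep (P : GOperad G A) (X : Type) (z : PApply P X) :
    ∃ (n : ℕ) (a : P.P n × (Fin n → X)), z = ⟨n, Quot.mk _ a⟩ := by
  obtain ⟨n, q⟩ := z
  obtain ⟨a, ha⟩ := Quot.exists_rep q
  exact ⟨n, a, by rw [ha]⟩

/-- Canonical representatives for elements of `PApply P (PApply P X)`. -/
lemma papply_rep2 (P : GOperad G A) (X : Type) (z : PApply P (PApply P X)) :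
    ∃ (n : ℕ) (p : P.P n) (k : Fin n → ℕ) (q : ∀ i, P.P (k i))
      (xs : ∀ i, Fin (k i) → X),
      z = ⟨n, Quot.mk _ (p, fun i => ⟨k i, Quot.mk _ (q i, xs i)⟩)⟩ := by
  obtain ⟨n, ⟨p, v⟩, hz⟩ := papply_rep P (PApply P X) z
  have h : ∀ i, ∃ a : P.P ((v i).1) × (Fin ((v i).1) → X), (v i).2 = Quot.mk _ a :=
    fun i => by
      obtain ⟨a, ha⟩ := Quot.exists_rep (v i).2
      exact ⟨a, ha.symm⟩
  choose a ha using h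
  refine ⟨n, p, fun i => (v i).1, fun i => (a i).1, fun i => (a i).2, ?_⟩
  rw [hz]
  congr 1
  apply congrArg (Quot.mk _)
  apply congrArg (Prod.mk p)
  funext i
  exact Sigma.ext rfl (heq_of_eq (ha i))

/-- Build `IsPullback` in `Type` from injectivity/surjectivity data. -/
lemma isPullback_of_bij {W X Y Z : Type} {fst : W ⟶ X} {snd : W ⟶ Y}
    {f : X ⟶ Z} {g : Y ⟶ Z} (comm : fst ≫ f = snd ≫ g)
    (hinj : ∀ w w', fst w = fst w' → snd w = snd w' → w = w')
    (hsurj : ∀ (x : X) (y : Y), f x = g y → ∃ w, fst w = x ∧ snd w = y) :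
    IsPullback fst snd f g := by
  apply IsPullback.of_isLimit (c := PullbackCone.mk fst snd comm)
  refine (PullbackCone.isLimitEquivBijective _).symm ⟨?_, ?_⟩
  · intro w w' h
    exact hinj w w' (congrArg (fun t => t.1.1) h) (congrArg (fun t => t.1.2) h)
  · rintro ⟨⟨x, y⟩, pf⟩
    obtain ⟨w, h1, h2⟩ := hsurj x y pf
    exact ⟨w, Subtype.ext (Prod.ext h1 h2)⟩

end Helpers2
section Parts

open CategoryTheory Limits

variable {G : ℕ → Type} [∀ n, Group (G n)] {A : ActionOperad G}

lemma papply_map_mk (P : GOperad G A) {X Y : Type} (f : X → Y) (n : ℕ)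
    (a : P.P n × (Fin n → X)) :
    (PEndofunctor P).map (TypeCat.ofHom f) ⟨n, Quot.mk _ a⟩ = ⟨n, Quot.mk _ (a.1, fun i => f (a.2 i))⟩ :=
  rfl

lemma preserves_cospan (P : GOperad G A)
    (hfree : ∀ (n : ℕ) (p : P.P n) (g : G n), P.act p g = p → A.π n g = 1)
    {X Y Z : Type} (f : X ⟶ Z) (g : Y ⟶ Z) :
    PreservesLimit (cospan f g) (PEndofunctor P) := by
  apply preservesLimit_of_preserves_limit_cone (Types.pullbackLimitCone f g).isLimit
  refine (PullbackCone.isLimitMapConeEquiv (Types.pullbackCone f g) (PEndofunctor P)).symm ?_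
  refine (PullbackCone.isLimitEquivBijective _).symm ⟨?_, ?_⟩
  · -- injectivity
    intro z z' h
    have hfst : (PEndofunctor P).map (TypeCat.ofHom fun p : Types.PullbackObj f g => p.1.1) z
        = (PEndofunctor P).map (TypeCat.ofHom fun p : Types.PullbackObj f g => p.1.1) z' :=
      congrArg (fun t => t.1.1) h
    have hsnd : (PEndofunctor P).map (TypeCat.ofHom fun p : Types.PullbackObj f g => p.1.2) z
        = (PEndofunctor P).map (TypeCat.ofHom fun p : Types.PullbackObj f g => p.1.2) z' :=
      congrArg (fun t => t.1.2) h
    obtain ⟨n, ⟨w, vs⟩, hz⟩ := papply_rep P _ z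
    obtain ⟨n', ⟨w', vs'⟩, hz'⟩ := papply_rep P _ z'
    rw [hz, hz'] at hfst hsnd ⊢
    obtain ⟨rfl, g₁, hg1, hg2⟩ :=
      (papply_mk_eq_iff P X (w, fun i => (vs i).1.1) (w', fun i => (vs' i).1.1)).mp hfst
    obtain ⟨E₂, g₂, hg3, hg4⟩ :=
      (papply_mk_eq_iff P Y (w, fun i => (vs i).1.2) (w', fun i => (vs' i).1.2)).mp hsnd
    have hg1' : w = P.act w' g₁ := hg1
    have hg3' : w = P.act w' g₂ := hg3
    have hg2' : ∀ i, (vs' i).1.1 = (vs ((A.π n g₁).symm i)).1.1 := fun i => hg2 i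
    have hg4' : ∀ i, (vs' i).1.2 = (vs ((A.π n g₂).symm i)).1.2 := fun i => hg4 i
    have hππ : A.π n g₁ = A.π n g₂ := pi_eq_of_act_eq P hfree (hg1'.symm.trans hg3')
    apply congrArg (Sigma.mk n)
    apply Quot.sound
    refine ⟨g₁, hg1', fun i => ?_⟩
    apply Subtype.ext
    apply Prod.ext
    · exact hg2' i
    · rw [hππ]; exact hg4' i
  · -- surjectivity
    rintro ⟨⟨zX, zY⟩, cond⟩
    obtain ⟨n, ⟨pX, xs⟩, hzX⟩ := papply_rep P _ zX
    obtain ⟨n', ⟨pY, ys⟩, hzY⟩ := papply_rep P _ zY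
    rw [hzX, hzY] at cond
    obtain ⟨rfl, u, hu1, hu2⟩ :=
      (papply_mk_eq_iff P Z (pX, fun i => f (xs i)) (pY, fun i => g (ys i))).mp cond
    have hu1' : pX = P.act pY u := hu1
    have hu2' : ∀ i, g (ys i) = f (xs ((A.π n u).symm i)) := fun i => hu2 i
    have pf : ∀ i, f (xs i) = g (ys (A.π n u i)) := fun i => by
      rw [hu2' (A.π n u i), Equiv.symm_apply_apply]
    refine ⟨⟨n, Quot.mk _ (pX, fun i => (⟨(xs i, ys (A.π n u i)), pf i⟩ :
      Types.PullbackObj f g))⟩, ?_⟩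
    apply Subtype.ext
    apply Prod.ext
    · exact hzX.symm
    · show (⟨n, Quot.mk _ (pX, fun i => ys (A.π n u i))⟩ : PApply P Y) = zY
      rw [hzY]
      exact (papply_mk_eq_iff P Y (pX, fun i => ys (A.π n u i)) (pY, ys)).mpr
        ⟨rfl, u, hu1', fun i => congrArg ys (Equiv.apply_symm_apply (A.π n u) i).symm⟩

lemma unit_square (P : GOperad G A)
    (X Y : Type) (f : X ⟶ Y) :
    IsPullback (pUnitMap P X) f ((PEndofunctor P).map f) (pUnitMap P Y) := by
  have comm : pUnitMap P X ≫ (PEndofunctor P).map f = f ≫ pUnitMap P Y := rfl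
  apply isPullback_of_bij comm
  · -- injectivity
    intro w w' h _
    obtain ⟨E, u, _, h2⟩ := (papply_mk_eq_iff P X (P.unit, fun _ => w)
      (P.unit, fun _ => w')).mp h
    exact (h2 0).symm
  · -- surjectivity
    intro z y cond
    obtain ⟨n, ⟨p, xs⟩, hz⟩ := papply_rep P _ z
    rw [hz] at cond ⊢
    obtain ⟨rfl, u, hu1, hu2⟩ :=
      (papply_mk_eq_iff P Y (p, fun i => f (xs i)) (P.unit, fun _ => y)).mp cond
    refine ⟨xs 0, ?_, ?_⟩
    · exact ((papply_mk_eq_iff P X (p, xs) (P.unit, fun _ => xs 0)).mpr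
        ⟨rfl, u, hu1, fun i => congrArg xs (Subsingleton.elim _ _)⟩).symm
    · exact ((hu2 0).trans (congrArg (fun t => f (xs t)) (Subsingleton.elim _ _))).symm

end Parts
section PartC

open CategoryTheory Limits

variable {G : ℕ → Type} [∀ n, Group (G n)] {A : ActionOperad G}

lemma mu_square (P : GOperad G A)
    (hfree : ∀ (n : ℕ) (p : P.P n) (g : G n), P.act p g = p → A.π n g = 1)
    (mu : ∀ X : Type, (PEndofunctor P).obj ((PEndofunctor P).obj X) ⟶
      (PEndofunctor P).obj X) (hm : IsPMulMap P mu)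
    (X Y : Type) (f : X ⟶ Y) :
    IsPullback (mu X) ((PEndofunctor P).map ((PEndofunctor P).map f))
      ((PEndofunctor P).map f) (mu Y) := by
  have comm : mu X ≫ (PEndofunctor P).map f
      = (PEndofunctor P).map ((PEndofunctor P).map f) ≫ mu Y := by
    refine ConcreteCategory.hom_ext _ _ fun z => ?_
    obtain ⟨n, p, k, q, xs, hz⟩ := papply_rep2 P X z
    show (PEndofunctor P).map f (mu X z)
      = mu Y ((PEndofunctor P).map ((PEndofunctor P).map f) z)
    rw [hz]
    exact (congrArg ((PEndofunctor P).map f) (hm X n k p q xs)).trans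
      (hm Y n k p q (fun i j => f (xs i j))).symm
  apply isPullback_of_bij comm
  · -- injectivity
    intro z z' h1 h2
    obtain ⟨n, p, k, q, x, hz⟩ := papply_rep2 P X z
    obtain ⟨n', p', k', q', x', hz'⟩ := papply_rep2 P X z'
    rw [hz, hz'] at h1 h2 ⊢
    -- outer extraction from h2
    obtain ⟨rfl, g, hg1, hg2⟩ := (papply_mk_eq_iff P (PApply P Y)
      (p, fun i => ⟨k i, Quot.mk _ (q i, fun j => f (x i j))⟩)
      (p', fun i => ⟨k' i, Quot.mk _ (q' i, fun j => f (x' i j))⟩)).mp h2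
    have hg1' : p = P.act p' g := hg1
    set σ := A.π n g with hσ
    have hg2' : ∀ i, (⟨k' i, Quot.mk _ (q' i, fun j => f (x' i j))⟩ : PApply P Y)
        = ⟨k (σ.symm i), Quot.mk _ (q (σ.symm i), fun j => f (x (σ.symm i) j))⟩ :=
      fun i => hg2 i
    have dag : ∀ a, (⟨k' (σ a), Quot.mk _ (q' (σ a), fun j => f (x' (σ a) j))⟩ : PApply P Y)
        = ⟨k a, Quot.mk _ (q a, fun j => f (x a j))⟩ := fun a => by
      rw [hg2' (σ a)]
      exact congrArg (fun t => (⟨k t, Quot.mk _ (q t, fun j => f (x t j))⟩ : PApply P Y))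
        (Equiv.symm_apply_apply σ a)
    choose Ea γ hq _ using fun a =>
      ((papply_mk_eq_iff P Y (q' (σ a), fun j => f (x' (σ a) j))
        (q a, fun j => f (x a j))).mp (dag a))
    -- re-present z'
    have hz'' : (⟨n, Quot.mk (PRel P n (PApply P X))
          (p', fun i => (⟨k' i, Quot.mk (PRel P (k' i) X) (q' i, x' i)⟩ : PApply P X))⟩ :
            PApply P (PApply P X))
        = ⟨n, Quot.mk (PRel P n (PApply P X))
            (p, fun a => ⟨k' (σ a), Quot.mk (PRel P (k' (σ a)) X) (q' (σ a), x' (σ a))⟩)⟩ := by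
      apply congrArg (Sigma.mk n)
      exact (Quot.sound ⟨g, hg1', fun i =>
        congrArg (fun t => (⟨k' t, Quot.mk _ (q' t, x' t)⟩ : PApply P X))
          (Equiv.apply_symm_apply σ i).symm⟩).symm
    rw [hz''] at h1 ⊢
    have h1' := (hm X n k p q x).symm.trans (h1.trans
      (hm X n (fun a => k' (σ a)) p (fun a => q' (σ a)) (fun a => x' (σ a))))
    obtain ⟨E₆, u, hu1, hu2⟩ := (papply_mk_eq_iff P X
      (P.comp p q, fun s => x ((finSigmaEquiv k).symm s).1 ((finSigmaEquiv k).symm s).2)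
      (P.comp p (fun a => q' (σ a)),
        fun s => (fun a => x' (σ a)) ((finSigmaEquiv (fun a => k' (σ a))).symm s).1
          ((finSigmaEquiv (fun a => k' (σ a))).symm s).2)).mp h1'
    -- the derivation
    have hq' : ∀ a, q' (σ a) = castF P.P (Ea a).symm (P.act (q a) (γ a)) := fun a => by
      rw [← hq a, castF_castF, castF_self]
    have e' : k = fun a => k' (σ a) := funext (fun a => (Ea a).symm)
    have key : P.comp p (fun a => q' (σ a))
        = P.act (castF P.P E₆ (P.comp p q))
            (A.comp 1 (fun a => castF G (Ea a).symm (γ a))) := by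
      calc P.comp p (fun a => q' (σ a))
          = P.comp p (fun a => P.act (castF P.P (congrFun e' a) (q a))
              (castF G (Ea a).symm (γ a))) := by
            apply congrArg (fun Y₀ : ∀ a, P.P (k' (σ a)) => P.comp p Y₀)
            funext a
            rw [hq' a, castF_act]
        _ = P.act (P.comp p (fun a => castF P.P (congrFun e' a) (q a)))
              (A.comp 1 (fun a => castF G (Ea a).symm (γ a))) :=
            P.equiv_inner p _ _
        _ = P.act (castF P.P E₆ (P.comp p q))
              (A.comp 1 (fun a => castF G (Ea a).symm (γ a))) := by
            rw [comp_congr P e' E₆]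
    have hact : P.act (castF P.P E₆ (P.comp p q))
        ((A.comp 1 (fun a => castF G (Ea a).symm (γ a))) * u)
          = castF P.P E₆ (P.comp p q) := by
      rw [P.act_mul, ← key, ← hu1]
    have hπ1 := hfree _ _ _ hact
    have h5 : A.π _ u = (A.π _ (A.comp 1 (fun a => castF G (Ea a).symm (γ a))))⁻¹ :=
      eq_inv_of_mul_eq_one_right (by rw [← map_mul]; exact hπ1)
    have hπu : ∀ t, (A.π _ u).symm t
        = A.π _ (A.comp 1 (fun a => castF G (Ea a).symm (γ a))) t := fun t => by
      rw [h5]; rfl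
    have xrel : ∀ (a : Fin n) (b : Fin (k' (σ a))),
        x' (σ a) b = x a (Fin.cast (Ea a)
          (A.π _ (castF G (Ea a).symm (γ a)) b)) := fun a b => by
      have s1 : (A.π _ u).symm (finSigmaEquiv (fun a => k' (σ a)) ⟨a, b⟩)
          = finSigmaEquiv (fun a => k' (σ a))
              ⟨a, A.π _ (castF G (Ea a).symm (γ a)) b⟩ := by
        rw [hπu, A.π_comp]
        exact pOC_one_apply (fun a => k' (σ a)) (A.π n 1) (map_one (A.π n))
          (fun a => A.π _ (castF G (Ea a).symm (γ a))) a b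
      have s2 : Fin.cast E₆.symm (finSigmaEquiv (fun a => k' (σ a))
            ⟨a, A.π _ (castF G (Ea a).symm (γ a)) b⟩)
          = finSigmaEquiv k ⟨a, Fin.cast (Ea a)
              (A.π _ (castF G (Ea a).symm (γ a)) b)⟩ :=
        fsE_cast e'.symm E₆.symm rfl (by simp [Fin.coe_cast])
      calc x' (σ a) b
          = _ := (flat_apply (fun a => x' (σ a)) a b).symm.trans
              (hu2 (finSigmaEquiv (fun a => k' (σ a)) ⟨a, b⟩))
        _ = x a (Fin.cast (Ea a) (A.π _ (castF G (Ea a).symm (γ a)) b)) := by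
            rw [s1, s2]
            exact flat_apply x a _
    apply congrArg (Sigma.mk n)
    apply congrArg (Quot.mk _)
    apply congrArg (Prod.mk p)
    funext a
    apply (papply_mk_eq_iff P X (q a, x a) (q' (σ a), x' (σ a))).mpr
    refine ⟨(Ea a).symm, (castF G (Ea a).symm (γ a))⁻¹, ?_, ?_⟩
    · rw [hq' a, castF_act, ← P.act_mul, mul_inv_cancel, P.act_one]
    · intro i
      have hsymm : (A.π _ ((castF G (Ea a).symm (γ a))⁻¹)).symm i
          = A.π _ (castF G (Ea a).symm (γ a)) i := by rw [map_inv]; rfl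
      rw [hsymm]
      exact xrel a i
  · -- surjectivity
    intro zz b cond
    obtain ⟨m, ⟨r, xx⟩, hza⟩ := papply_rep P X zz
    obtain ⟨n, pp, k, q, y, hb⟩ := papply_rep2 P Y b
    rw [hza, hb] at cond ⊢
    have cond' := cond.trans (hm Y n k pp q y)
    obtain ⟨rfl, u, hu1, hu2⟩ := (papply_mk_eq_iff P Y (r, fun i => f (xx i))
      (P.comp pp q, fun s => y ((finSigmaEquiv k).symm s).1
        ((finSigmaEquiv k).symm s).2)).mp cond'
    have hu1' : r = P.act (P.comp pp q) u := hu1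
    have hu2' : ∀ t, y ((finSigmaEquiv k).symm t).1 ((finSigmaEquiv k).symm t).2
        = f (xx ((A.π _ u).symm t)) := fun t => hu2 t
    refine ⟨⟨n, Quot.mk _ (pp, fun i => ⟨k i, Quot.mk _ (q i,
      fun j => xx ((A.π _ u).symm (finSigmaEquiv k ⟨i, j⟩)))⟩)⟩, ?_, ?_⟩
    · refine (hm X n k pp q (fun i j => xx ((A.π _ u).symm (finSigmaEquiv k ⟨i, j⟩)))).trans ?_
      apply (papply_mk_eq_iff P X
        (P.comp pp q, fun s => (fun i j => xx ((A.π _ u).symm (finSigmaEquiv k ⟨i, j⟩)))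
          ((finSigmaEquiv k).symm s).1 ((finSigmaEquiv k).symm s).2)
        (r, xx)).mpr
      refine ⟨rfl, u⁻¹, ?_, ?_⟩
      · show P.comp pp q = P.act r u⁻¹
        rw [hu1', ← P.act_mul, mul_inv_cancel, P.act_one]
      · intro j
        have hj : (Fin.cast (Eq.refl (∑ i, k i)).symm ((A.π _ u⁻¹).symm j))
            = A.π _ u j := by rw [map_inv]; rfl
        calc xx j
            = xx ((A.π _ u).symm (A.π _ u j)) := by rw [Equiv.symm_apply_apply]
          _ = (fun i j => xx ((A.π _ u).symm (finSigmaEquiv k ⟨i, j⟩)))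
                ((finSigmaEquiv k).symm (A.π _ u j)).1
                ((finSigmaEquiv k).symm (A.π _ u j)).2 :=
              (congrArg (fun t => xx ((A.π _ u).symm t))
                (Equiv.apply_symm_apply (finSigmaEquiv k) (A.π _ u j))).symm
          _ = _ := by rw [hj]
    · apply congrArg (Sigma.mk n)
      apply congrArg (Quot.mk _)
      apply congrArg (Prod.mk pp)
      funext i
      apply congrArg (Sigma.mk (k i))
      apply congrArg (Quot.mk _)
      apply congrArg (Prod.mk (q i))
      funext j
      exact (hu2' (finSigmaEquiv k ⟨i, j⟩)).symm.trans
        (congrArg (fun s : Σ i, Fin (k i) => y s.1 s.2)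
          (Equiv.symm_apply_apply (finSigmaEquiv k) ⟨i, j⟩))
end PartC

/-- If for every `n`, `p ∈ P(n)`, `g ∈ G(n)` with `p·g = p` the
permutation `πₙ(g)` is the identity, then the monad `P̲` on sets is cartesian: `P̲`
preserves pullbacks, and all naturality squares of the unit `η` and of the
multiplication `μ` are pullback squares. -/
theorem pMonad_cartesian (G : ℕ → Type) [∀ n, Group (G n)]
    (A : ActionOperad G) (P : GOperad G A)
    (hfree : ∀ (n : ℕ) (p : P.P n) (g : G n), P.act p g = p → A.π n g = 1) :
    Nonempty (Limits.PreservesLimitsOfShape Limits.WalkingCospan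
        (PEndofunctor P)) ∧
      (∀ (X Y : Type) (f : X ⟶ Y),
        IsPullback (pUnitMap P X) f ((PEndofunctor P).map f) (pUnitMap P Y)) ∧
      ∀ (mu : ∀ X : Type, (PEndofunctor P).obj ((PEndofunctor P).obj X) ⟶
          (PEndofunctor P).obj X), IsPMulMap P mu →
        ∀ (X Y : Type) (f : X ⟶ Y),
          IsPullback (mu X) ((PEndofunctor P).map ((PEndofunctor P).map f))
            ((PEndofunctor P).map f) (mu Y) := by
  refine ⟨?_, ?_, ?_⟩
  · refine ⟨⟨fun {K} => ?_⟩⟩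
    have := preserves_cospan P hfree (K.map Limits.WalkingCospan.Hom.inl)
      (K.map Limits.WalkingCospan.Hom.inr)
    exact Limits.preservesLimit_of_iso_diagram (PEndofunctor P)
      (Limits.diagramIsoCospan K).symm
  · exact fun X Y f => unit_square P X Y f
  · exact fun mu hmu X Y f => mu_square P hfree mu hmu X Y f
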